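/- Let ρ : ℝ → [0,∞) be an integrable function and let ρ̂(ξ) = ∫_ℝ ρ(x) e^{iξx} dx denote its Fourier transform. Then for every ξ ∈ ℝ, ∬_{ℝ×ℝ} ρ(x) ρ(y) (e^{iξx} − e^{iξy})/(x − y) dx dy = iξ ∫_0^1 ρ̂(σξ) ρ̂((1−σ)ξ) dσ, where the quotient is understood as iξ e^{iξx} when x = y. (Fourier representation of the one-dimensional logarithmic interaction term.) -/

import Mathlib

open MeasureTheory Real Complex

/-- The Fourier transform `ρ̂(ξ) = ∫ ρ(x) e^{iξx} dx` of an integrable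
density. -/
noncomputable def fourierHat (ρ : ℝ → ℝ) (ξ : ℝ) : ℂ :=
  ∫ x : ℝ, (ρ x : ℂ) * Complex.exp (Complex.I * (ξ : ℂ) * (x : ℂ))

lemma kernel_eq (ξ x y : ℝ) :
    (if x = y then Complex.I * (ξ : ℂ) * Complex.exp (Complex.I * (ξ : ℂ) * (x : ℂ))
      else (Complex.exp (Complex.I * (ξ : ℂ) * (x : ℂ)) -
          Complex.exp (Complex.I * (ξ : ℂ) * (y : ℂ))) / ((x : ℂ) - (y : ℂ))) =
    Complex.I * (ξ : ℂ) *
      ∫ σ in (0:ℝ)..1, Complex.exp (Complex.I * (ξ : ℂ) * (((1-σ)*y + σ*x : ℝ) : ℂ)) := by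
  by_cases h : x = y
  · subst h
    have harg : ∀ σ : ℝ, ((1-σ)*x + σ*x : ℝ) = x := fun σ => by ring
    simp [harg]
  · simp only [if_neg h]
    by_cases hξ : ξ = 0
    · subst hξ
      simp
    · have hxy : (x : ℂ) - y ≠ 0 := sub_ne_zero.2 (by exact_mod_cast h)
      set c : ℂ := Complex.I * (ξ : ℂ) * ((x : ℂ) - y) with hc
      have hc0 : c ≠ 0 := by
        apply mul_ne_zero (mul_ne_zero Complex.I_ne_zero _) hxy
        exact_mod_cast hξ
      have hint : ∀ σ : ℝ, Complex.exp (Complex.I * (ξ : ℂ) * (((1-σ)*y + σ*x : ℝ) : ℂ)) =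
          Complex.exp (Complex.I * (ξ : ℂ) * (y : ℂ)) * Complex.exp (c * σ) := by
        intro σ
        rw [← Complex.exp_add]
        congr 1
        push_cast [hc]
        ring
      have hEx : Complex.exp (Complex.I * (ξ : ℂ) * (y : ℂ)) *
            Complex.exp (Complex.I * (ξ : ℂ) * ((x : ℂ) - (y : ℂ))) =
          Complex.exp (Complex.I * (ξ : ℂ) * (x : ℂ)) := by
        rw [← Complex.exp_add]
        congr 1
        ring
      rw [intervalIntegral.integral_congr (fun σ _ => hint σ),
        intervalIntegral.integral_const_mul, integral_exp_mul_complex hc0]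
      push_cast
      rw [mul_one, mul_zero, Complex.exp_zero]
      field_simp
      rw [hc]
      linear_combination (-((x:ℂ)-y)) * Complex.I * (ξ:ℂ) * hEx

theorem fourier_interaction_representation (ρ : ℝ → ℝ)
    (hρ0 : ∀ x, 0 ≤ ρ x) (hρ : Integrable ρ) (ξ : ℝ) :
    (∫ p : ℝ × ℝ, (ρ p.1 : ℂ) * (ρ p.2 : ℂ) *
        (if p.1 = p.2 then
          Complex.I * (ξ : ℂ) * Complex.exp (Complex.I * (ξ : ℂ) * (p.1 : ℂ))
        else
          (Complex.exp (Complex.I * (ξ : ℂ) * (p.1 : ℂ)) -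
              Complex.exp (Complex.I * (ξ : ℂ) * (p.2 : ℂ))) /
            ((p.1 : ℂ) - (p.2 : ℂ)))) =
      Complex.I * (ξ : ℂ) *
        ∫ σ in (0 : ℝ)..1, fourierHat ρ (σ * ξ) * fourierHat ρ ((1 - σ) * ξ) := by
  have hρc : Integrable (fun x : ℝ => (ρ x : ℂ)) := hρ.ofReal
  set ν : Measure ℝ := volume.restrict (Set.Ioc (0:ℝ) 1) with hν
  haveI : IsFiniteMeasure ν := ⟨by
    rw [hν, Measure.restrict_apply_univ, Real.volume_Ioc]; norm_num⟩
  set f : (ℝ × ℝ) → ℝ → ℂ := fun p σ =>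
    (ρ p.1 : ℂ) * (ρ p.2 : ℂ) *
      Complex.exp (Complex.I * (ξ : ℂ) * (((1-σ)*p.2 + σ*p.1 : ℝ) : ℂ)) with hf
  -- Step 1: rewrite the kernel via kernel_eq and pull out I * ξ
  have step1 : (∫ p : ℝ × ℝ, (ρ p.1 : ℂ) * (ρ p.2 : ℂ) *
        (if p.1 = p.2 then
          Complex.I * (ξ : ℂ) * Complex.exp (Complex.I * (ξ : ℂ) * (p.1 : ℂ))
        else
          (Complex.exp (Complex.I * (ξ : ℂ) * (p.1 : ℂ)) -
              Complex.exp (Complex.I * (ξ : ℂ) * (p.2 : ℂ))) /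
            ((p.1 : ℂ) - (p.2 : ℂ)))) =
      Complex.I * (ξ : ℂ) * ∫ p : ℝ × ℝ, ∫ σ, f p σ ∂ν := by
    rw [← integral_const_mul]
    congr 1
    funext p
    rw [kernel_eq ξ p.1 p.2, intervalIntegral.integral_of_le zero_le_one, ← hν]
    have h2 : ∫ σ, f p σ ∂ν = (ρ p.1 : ℂ) * (ρ p.2 : ℂ) *
        ∫ σ, Complex.exp (Complex.I * (ξ : ℂ) * (((1-σ)*p.2 + σ*p.1 : ℝ) : ℂ)) ∂ν := by
      rw [hf, ← integral_const_mul]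
    rw [h2]; ring
  rw [step1]
  congr 1
  -- Step 2: Fubini
  have hexp_norm : ∀ (ξ' r : ℝ), ‖Complex.exp (Complex.I * (ξ' : ℂ) * (r : ℂ))‖ = 1 := by
    intro ξ' r
    have : Complex.I * (ξ' : ℂ) * (r : ℂ) = ((ξ' * r : ℝ) : ℂ) * Complex.I := by
      push_cast; ring
    rw [this, Complex.norm_exp_ofReal_mul_I]
  have hmeas : AEStronglyMeasurable (Function.uncurry f) (volume.prod ν) := by
    apply AEStronglyMeasurable.mul
    · exact (hρc.mul_prod hρc).aestronglyMeasurable.comp_fst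
    · apply Continuous.aestronglyMeasurable
      fun_prop
  have hintF : Integrable (Function.uncurry f) (volume.prod ν) := by
    have hbd : Integrable (fun q : (ℝ × ℝ) × ℝ => (|ρ q.1.1| * |ρ q.1.2|) * 1)
        (volume.prod ν) := (hρ.norm.mul_prod hρ.norm).mul_prod (integrable_const (1:ℝ))
    apply Integrable.mono' hbd hmeas
    filter_upwards with q
    rw [Function.uncurry, hf]
    simp only [norm_mul, hexp_norm, Complex.norm_real, Real.norm_eq_abs, mul_one]
    exact le_refl _
  rw [integral_integral_swap hintF]
  -- Step 3: inner integral is a product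
  rw [hν, ← intervalIntegral.integral_of_le zero_le_one]
  apply intervalIntegral.integral_congr
  intro σ _
  have hsplit : ∀ p : ℝ × ℝ, f p σ =
      ((ρ p.1 : ℂ) * Complex.exp (Complex.I * ((σ * ξ : ℝ) : ℂ) * (p.1 : ℂ))) *
      ((ρ p.2 : ℂ) * Complex.exp (Complex.I * (((1 - σ) * ξ : ℝ) : ℂ) * (p.2 : ℂ))) := by
    intro p
    rw [hf]
    simp only
    rw [mul_mul_mul_comm, ← Complex.exp_add]
    congr 2
    push_cast
    ring
  calc ∫ p : ℝ × ℝ, f p σ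
      = ∫ p : ℝ × ℝ, ((ρ p.1 : ℂ) * Complex.exp (Complex.I * ((σ * ξ : ℝ) : ℂ) * (p.1 : ℂ))) *
          ((ρ p.2 : ℂ) * Complex.exp (Complex.I * (((1 - σ) * ξ : ℝ) : ℂ) * (p.2 : ℂ))) := by
        exact integral_congr_ae (Filter.Eventually.of_forall hsplit)
    _ = fourierHat ρ (σ * ξ) * fourierHat ρ ((1 - σ) * ξ) := by
        rw [fourierHat, fourierHat, ← integral_prod_mul, ← Measure.volume_eq_prod]
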